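/- For every n ≥ 1, the ℂ[x,y₀]-derivation D with D(z₁) = x, D(z₂) = 2y₀z₁ + 1, D(y_i) = i·y₀·y_{i-1} (1 ≤ i ≤ n) preserves the ideal of the threefold X_n ⊂ 𝔸^{n+4} defined by the equations y_i y_j = y_k y_ℓ (i+j = k+ℓ), z₂ y_i = z₁ y_{i+1}, x y_{i+1} = y_i(y₀ z₁ + 1), x z₂ = z₁(y₀ z₁ + 1), and the induced derivation on the coordinate ring of X_n is locally nilpotent and has no zeros on X_n. -/
import Mathlib


open MvPolynomial

/-- A derivation `D` is locally nilpotent if every element is annihilated by some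
iterate of `D`. -/
def Derivation.IsLocallyNilpotent {R A : Type*} [CommRing R] [CommRing A] [Algebra R A]
    (D : Derivation R A A) : Prop :=
  ∀ a : A, ∃ n : ℕ, (⇑D)^[n] a = 0

/-- Coordinates: `x = X 0`, `y₀ = X 1`, `z₁ = X 2`, `z₂ = X 3`, `y_i = X (3+i)` for
`i ≥ 1`; only the variables `X 0, …, X (3+n)` are used for `X_n ⊂ 𝔸^{n+4}`. -/
noncomputable abbrev RY : Type := MvPolynomial ℕ ℂ

/-- `y i`, for `0 ≤ i`. -/
noncomputable def yv (i : ℕ) : RY := if i = 0 then X 1 else X (3 + i)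

/-- The `ℂ[x,y₀]`-derivation with `D z₁ = x`, `D z₂ = 2y₀z₁ + 1`,
`D y_i = i·y₀·y_{i-1}` for `1 ≤ i ≤ n`. -/
noncomputable def Dn (n : ℕ) : Derivation ℂ RY RY :=
  MvPolynomial.mkDerivation ℂ
    (fun j => if j = 2 then X 0
              else if j = 3 then 2 * X 1 * X 2 + 1
              else if 4 ≤ j ∧ j ≤ 3 + n then ((j - 3 : ℕ) : RY) * X 1 * yv (j - 4)
              else 0)

/-- The defining equations of `X_n ⊂ 𝔸^{n+4}`. -/
def Gset (n : ℕ) : Set RY :=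
  {f | (∃ i j k l : ℕ, i + j = k + l ∧ i ≤ n ∧ j ≤ n ∧ k ≤ n ∧ l ≤ n ∧
          f = yv i * yv j - yv k * yv l) ∨
       (∃ i : ℕ, i < n ∧ f = X 3 * yv i - X 2 * yv (i + 1)) ∨
       (∃ i : ℕ, i < n ∧ f = X 0 * yv (i + 1) - yv i * (X 1 * X 2 + 1)) ∨
       f = X 0 * X 3 - X 2 * (X 1 * X 2 + 1)}

lemma DnX (n j : ℕ) : Dn n (X j) =
    (if j = 2 then X 0
     else if j = 3 then 2 * X 1 * X 2 + 1
     else if 4 ≤ j ∧ j ≤ 3 + n then ((j - 3 : ℕ) : RY) * X 1 * yv (j - 4)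
     else 0) := by
  simp [Dn, mkDerivation_X]

lemma Dyv (n i : ℕ) (h : i ≤ n) : Dn n (yv i) = (i : RY) * X 1 * yv (i - 1) := by
  rcases i with _ | k
  · simp [yv, DnX]
  · have : (3 : ℕ) + (k+1) = k + 4 := by ring
    rw [yv]
    simp only [Nat.succ_ne_zero, if_false, this, DnX]
    have h2 : ¬ (k + 4 = 2) := by omega
    have h3 : ¬ (k + 4 = 3) := by omega
    have h4 : 4 ≤ k + 4 ∧ k + 4 ≤ 3 + n := by omega
    rw [if_neg h2, if_neg h3, if_pos h4]
    have e1 : k + 4 - 3 = k + 1 := rfl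
    have e2 : k + 4 - 4 = k := rfl
    have e3 : k + 1 - 1 = k := rfl
    rw [e1, e2, e3]

section Nilp
variable (D : Derivation ℂ RY RY)

lemma iter_zero (m : ℕ) : (⇑D)^[m] 0 = 0 :=
  Function.iterate_fixed (map_zero D) m

lemma iter_add (m : ℕ) (a b : RY) : (⇑D)^[m] (a + b) = (⇑D)^[m] a + (⇑D)^[m] b := by
  induction m generalizing a b with
  | zero => simp
  | succ m ih => simp [Function.iterate_succ_apply, map_add, ih]

def Nilp (a : RY) : Prop := ∃ m : ℕ, (⇑D)^[m] a = 0

lemma nilp_of_D {a : RY} (h : Nilp D (D a)) : Nilp D a := by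
  obtain ⟨m, hm⟩ := h
  exact ⟨m + 1, by rwa [Function.iterate_succ_apply]⟩

lemma nilp_zero : Nilp D 0 := ⟨0, rfl⟩

lemma nilp_add {a b : RY} (ha : Nilp D a) (hb : Nilp D b) : Nilp D (a + b) := by
  obtain ⟨p, hp⟩ := ha; obtain ⟨q, hq⟩ := hb
  refine ⟨p + q, ?_⟩
  rw [iter_add]
  have h1 : (⇑D)^[p + q] a = 0 := by
    rw [add_comm, Function.iterate_add_apply, hp, iter_zero]
  have h2 : (⇑D)^[p + q] b = 0 := by
    rw [Function.iterate_add_apply, hq, iter_zero]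
  rw [h1, h2, add_zero]

lemma nilp_mul_aux : ∀ (s : ℕ) (a b : RY) (p q : ℕ), p + q = s →
    (⇑D)^[p] a = 0 → (⇑D)^[q] b = 0 → (⇑D)^[s] (a * b) = 0 := by
  intro s
  induction s with
  | zero =>
    intro a b p q hpq hp hq
    obtain ⟨rfl, rfl⟩ : p = 0 ∧ q = 0 := by omega
    simp only [Function.iterate_zero, id_eq] at hp hq ⊢
    rw [hp, zero_mul]
  | succ s ih =>
    intro a b p q hpq hp hq
    rcases Nat.eq_zero_or_pos p with rfl | hp0
    · simp only [Function.iterate_zero, id_eq] at hp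
      rw [hp, zero_mul, iter_zero]
    rcases Nat.eq_zero_or_pos q with rfl | hq0
    · simp only [Function.iterate_zero, id_eq] at hq
      rw [hq, mul_zero, iter_zero]
    obtain ⟨p', rfl⟩ : ∃ p', p = p' + 1 := ⟨p - 1, by omega⟩
    obtain ⟨q', rfl⟩ : ∃ q', q = q' + 1 := ⟨q - 1, by omega⟩
    rw [Function.iterate_succ_apply]
    have hD : D (a * b) = a * D b + b * D a := by
      rw [D.leibniz]; simp [smul_eq_mul]
    rw [hD, iter_add]
    have h1 : (⇑D)^[s] (a * (D b)) = 0 := by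
      refine ih a (D b) (p'+1) q' (by omega) hp ?_
      rw [← Function.iterate_succ_apply]; exact hq
    have h2 : (⇑D)^[s] (b * (D a)) = 0 := by
      refine ih b (D a) (q'+1) p' (by omega) hq ?_
      rw [← Function.iterate_succ_apply]; exact hp
    rw [h1, h2, add_zero]

lemma nilp_mul {a b : RY} (ha : Nilp D a) (hb : Nilp D b) : Nilp D (a * b) := by
  obtain ⟨p, hp⟩ := ha; obtain ⟨q, hq⟩ := hb
  exact ⟨p + q, nilp_mul_aux D (p + q) a b p q rfl hp hq⟩

lemma nilp_C (c : ℂ) : Nilp D (C c) :=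
  ⟨1, by simpa using D.map_algebraMap c⟩

end Nilp

lemma nilp_natCast (D : Derivation ℂ RY RY) (m : ℕ) : Nilp D ((m : ℕ) : RY) := by
  have : ((m : ℕ) : RY) = C ((m : ℕ) : ℂ) := by
    rw [map_natCast (C : ℂ →+* RY) m]
  rw [this]; exact nilp_C D _

lemma nilpX (n : ℕ) : ∀ j : ℕ, Nilp (Dn n) (X j) := by
  intro j
  induction j using Nat.strong_induction_on with
  | _ j ih =>
    match j with
    | 0 => exact nilp_of_D _ (by rw [DnX]; norm_num; exact nilp_zero _)
    | 1 => exact nilp_of_D _ (by rw [DnX]; norm_num; exact nilp_zero _)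
    | 2 =>
      refine nilp_of_D _ ?_
      rw [DnX]; norm_num
      exact ih 0 (by omega)
    | 3 =>
      refine nilp_of_D _ ?_
      rw [DnX]; norm_num
      have h23 : (2 * X 1 * X 2 + 1 : RY) = ((2:ℕ):RY) * X 1 * X 2 + C 1 := by
        rw [map_one C]; push_cast; ring
      rw [h23]
      exact nilp_add _ (nilp_mul _ (nilp_mul _ (nilp_natCast _ 2) (ih 1 (by omega)))
        (ih 2 (by omega))) (nilp_C _ 1)
    | (k + 4) =>
      refine nilp_of_D _ ?_
      rw [DnX]
      have h2 : ¬ (k + 4 = 2) := by omega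
      have h3 : ¬ (k + 4 = 3) := by omega
      rw [if_neg h2, if_neg h3]
      by_cases hb : 4 ≤ k + 4 ∧ k + 4 ≤ 3 + n
      · rw [if_pos hb]
        refine nilp_mul _ (nilp_mul _ (nilp_natCast _ _) (ih 1 (by omega))) ?_
        rcases Nat.eq_zero_or_pos k with rfl | hk
        · exact nilp_of_D _ (by rw [yv]; norm_num; rw [DnX]; norm_num; exact nilp_zero _)
        · rw [yv, if_neg (by omega)]
          exact ih (3 + k) (by omega)
      · rw [if_neg hb]; exact nilp_zero _

lemma DnLocallyNilp (n : ℕ) : ∀ a : RY, Nilp (Dn n) a := by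
  intro a
  induction a using MvPolynomial.induction_on with
  | C c => exact nilp_C _ c
  | add p q hp hq => exact nilp_add _ hp hq
  | mul_X p i hp => exact nilp_mul _ hp (nilpX n i)

lemma termmem (n a b p q m : ℕ)
    (h : m ≠ 0 → a + b = p + q ∧ a ≤ n ∧ b ≤ n ∧ p ≤ n ∧ q ≤ n) :
    ((m : ℕ) : RY) * (yv a * yv b - yv p * yv q) ∈ Ideal.span (Gset n) := by
  rcases Nat.eq_zero_or_pos m with rfl | hm
  · simp
  · obtain ⟨h1, h2, h3, h4, h5⟩ := h (by omega)
    exact Ideal.mul_mem_left _ _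
      (Ideal.subset_span (Or.inl ⟨a, b, p, q, h1, h2, h3, h4, h5, rfl⟩))

lemma DG1 (n i j k l : ℕ) (hs : i + j = k + l) (hi : i ≤ n) (hj : j ≤ n)
    (hk : k ≤ n) (hl : l ≤ n) :
    Dn n (yv i * yv j - yv k * yv l) ∈ Ideal.span (Gset n) := by
  by_cases h0 : i + j = 0
  · obtain ⟨rfl, rfl, rfl, rfl⟩ : i = 0 ∧ j = 0 ∧ k = 0 ∧ l = 0 := by omega
    rw [sub_self, map_zero]; exact zero_mem _
  · set s := i + j - 1 with hs'
    set p := min n s with hp'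
    set q := s - p with hq'
    have hp : p ≤ n := min_le_left _ _
    have hq : q ≤ n := by omega
    have hpq : p + q = s := by omega
    have hc : ((i : ℕ) : RY) + ((j : ℕ) : RY) = ((k : ℕ) : RY) + ((l : ℕ) : RY) := by
      exact_mod_cast congrArg (Nat.cast : ℕ → RY) hs
    have hD : Dn n (yv i * yv j - yv k * yv l)
        = X 1 * (((i : ℕ) : RY) * (yv (i-1) * yv j - yv p * yv q)
               + ((j : ℕ) : RY) * (yv i * yv (j-1) - yv p * yv q)
               - ((k : ℕ) : RY) * (yv (k-1) * yv l - yv p * yv q)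
               - ((l : ℕ) : RY) * (yv k * yv (l-1) - yv p * yv q)) := by
      rw [map_sub, Derivation.leibniz, Derivation.leibniz,
        Dyv n i hi, Dyv n j hj, Dyv n k hk, Dyv n l hl]
      simp only [smul_eq_mul]
      linear_combination (X 1 * (yv p * yv q)) * hc
    rw [hD]
    refine Ideal.mul_mem_left _ _ (sub_mem (sub_mem (add_mem ?_ ?_) ?_) ?_)
    · exact termmem n (i-1) j p q i (fun h => ⟨by omega, by omega, hj, hp, hq⟩)
    · exact termmem n i (j-1) p q j (fun h => ⟨by omega, hi, by omega, hp, hq⟩)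
    · exact termmem n (k-1) l p q k (fun h => ⟨by omega, by omega, hl, hp, hq⟩)
    · exact termmem n k (l-1) p q l (fun h => ⟨by omega, hk, by omega, hp, hq⟩)

lemma DG2 (n i : ℕ) (h : i < n) :
    Dn n (X 3 * yv i - X 2 * yv (i+1)) ∈ Ideal.span (Gset n) := by
  have hD : Dn n (X 3 * yv i - X 2 * yv (i+1))
      = ((i : ℕ) : RY) * X 1 * (X 3 * yv (i-1) - X 2 * yv i)
        - (X 0 * yv (i+1) - yv i * (X 1 * X 2 + 1)) := by
    rw [map_sub, Derivation.leibniz, Derivation.leibniz,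
      Dyv n i (le_of_lt h), Dyv n (i+1) h, DnX, DnX]
    have e : i + 1 - 1 = i := rfl
    rw [e]
    norm_num
    push_cast
    ring
  rw [hD]
  refine sub_mem ?_ (Ideal.subset_span (Or.inr (Or.inr (Or.inl ⟨i, h, rfl⟩))))
  rcases i with _ | m
  · simp
  · exact Ideal.mul_mem_left _ _
      (Ideal.subset_span (Or.inr (Or.inl ⟨m, by omega, rfl⟩)))

lemma DG3 (n i : ℕ) (h : i < n) :
    Dn n (X 0 * yv (i+1) - yv i * (X 1 * X 2 + 1)) ∈ Ideal.span (Gset n) := by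
  have hD : Dn n (X 0 * yv (i+1) - yv i * (X 1 * X 2 + 1))
      = ((i : ℕ) : RY) * X 1 * (X 0 * yv i - yv (i-1) * (X 1 * X 2 + 1)) := by
    rw [map_sub, Derivation.leibniz, Derivation.leibniz,
      Dyv n i (le_of_lt h), Dyv n (i+1) h, DnX]
    rw [map_add, Derivation.leibniz, Derivation.map_one_eq_zero, DnX, DnX]
    have e : i + 1 - 1 = i := rfl
    rw [e]
    norm_num
    push_cast
    ring
  rw [hD]
  rcases i with _ | m
  · simp
  · exact Ideal.mul_mem_left _ _
      (Ideal.subset_span (Or.inr (Or.inr (Or.inl ⟨m, by omega, rfl⟩))))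

lemma DG4 (n : ℕ) : Dn n (X 0 * X 3 - X 2 * (X 1 * X 2 + 1)) ∈ Ideal.span (Gset n) := by
  have hD : Dn n (X 0 * X 3 - X 2 * (X 1 * X 2 + 1)) = 0 := by
    rw [map_sub, Derivation.leibniz, Derivation.leibniz,
      map_add, Derivation.leibniz, Derivation.map_one_eq_zero, DnX, DnX, DnX, DnX]
    norm_num
    ring
  rw [hD]; exact zero_mem _

lemma Dpres (n : ℕ) : ∀ g ∈ Ideal.span (Gset n), Dn n g ∈ Ideal.span (Gset n) := by
  intro g hg
  refine Submodule.span_induction ?_ ?_ ?_ ?_ hg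
  · intro x hx
    rcases hx with ⟨i, j, k, l, h1, h2, h3, h4, h5, rfl⟩ | ⟨i, h1, rfl⟩ | ⟨i, h1, rfl⟩ | rfl
    · exact DG1 n i j k l h1 h2 h3 h4 h5
    · exact DG2 n i h1
    · exact DG3 n i h1
    · exact DG4 n
  · rw [map_zero]; exact zero_mem _
  · intro x y _ _ hx hy; rw [map_add]; exact add_mem hx hy
  · intro r x hx hDx
    rw [smul_eq_mul, Derivation.leibniz, smul_eq_mul, smul_eq_mul]
    exact add_mem (Ideal.mul_mem_left _ _ hDx) (Ideal.mul_mem_right _ _ hx)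

lemma part3 (n : ℕ) (hn : 1 ≤ n) (P : ℕ → ℂ)
    (hall : ∀ j : ℕ, eval P (Dn n (X j)) = 0) : False := by
  have h4 : Dn n (X 4) = ((1 : ℕ) : RY) * X 1 * X 1 := by
    rw [DnX]
    have h2 : ¬ ((4:ℕ) = 2) := by omega
    have h3 : ¬ ((4:ℕ) = 3) := by omega
    have hb : 4 ≤ 4 ∧ 4 ≤ 3 + n := by omega
    rw [if_neg h2, if_neg h3, if_pos hb]
    norm_num [yv]
  have h3' : Dn n (X 3) = 2 * X 1 * X 2 + 1 := by rw [DnX]; norm_num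
  have e4 := hall 4
  rw [h4] at e4
  simp only [Nat.cast_one, one_mul, map_mul, eval_X] at e4
  have hP1 : P 1 = 0 := by
    have := mul_self_eq_zero.mp e4
    exact this
  have e3 := hall 3
  rw [h3'] at e3
  simp only [map_add, map_mul, map_ofNat, eval_X, map_one, hP1] at e3
  norm_num at e3


/-- For every `n ≥ 1`, the derivation `D` with `D z₁ = x`, `D z₂ = 2y₀z₁+1`,
`D y_i = i·y₀·y_{i-1}` preserves the ideal of the threefold `X_n` defined by the
equations `y_i y_j = y_k y_ℓ` (`i+j = k+ℓ`), `z₂ y_i = z₁ y_{i+1}`,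
`x y_{i+1} = y_i(y₀z₁+1)`, `x z₂ = z₁(y₀z₁+1)`; the induced derivation is locally
nilpotent and has no zeros on `X_n`: at no point of `X_n` do all the images `D(X j)`
vanish. -/
theorem stmt_17 (n : ℕ) (hn : 1 ≤ n) :
    (∀ g ∈ Ideal.span (Gset n), Dn n g ∈ Ideal.span (Gset n)) ∧
    (Dn n).IsLocallyNilpotent ∧
    ∀ P : ℕ → ℂ, (∀ g ∈ Gset n, eval P g = 0) →
      ¬ ∀ j : ℕ, eval P (Dn n (X j)) = 0 := by
  exact ⟨Dpres n, DnLocallyNilp n, fun P _ h => part3 n hn P h⟩
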